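/- For every integer k ≥ 2 there exists a constant C_k > 0 such that for every positive integer d, every nonzero polynomial Q in k real variables of total degree at most d, every unit vector v ∈ ℝ^k, and every R > 0, one has ∫⁻_{y} #{t ∈ ℝ : Q(y + t•v) = 0} dμ(y) ≤ C_k·R^{k-1}·d, where the lower integral is taken over {y ∈ v^⊥ : ‖y‖ ≤ R} with respect to the (k−1)-dimensional Hausdorff measure μ on the hyperplane v^⊥ = {y ∈ ℝ^k : ⟨y, v⟩ = 0}, and #{t ∈ ℝ : Q(y + t•v) = 0} denotes the cardinality (in ℕ ∪ {∞}) of the zero set of Q along the line through y in direction v. -/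

import Mathlib

open MeasureTheory ENNReal RealInnerProductSpace

lemma polyzero : ∀ (n : ℕ) (P : MvPolynomial (Fin n) ℝ), P ≠ 0 →
    volume {x : Fin n → ℝ | MvPolynomial.eval x P = 0} = 0 := by
  intro n
  induction n with
  | zero =>
    intro P hP
    convert measure_empty
    · ext x
      simp only [Set.mem_setOf_eq, Set.mem_empty_iff_false, iff_false]
      obtain ⟨c, rfl⟩ := MvPolynomial.C_surjective (Fin 0) P
      simp only [MvPolynomial.eval_C]
      exact fun h => hP (by rw [h]; simp)
    · infer_instance
  | succ n ih =>
    intro P hP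
    set p := MvPolynomial.finSuccEquiv ℝ n P with hpdef
    have hp0 : p ≠ 0 := by
      simp only [hpdef, ne_eq, EmbeddingLike.map_eq_zero_iff]
      exact hP
    have hcoeff : p.coeff p.natDegree ≠ 0 := by
      rw [← Polynomial.leadingCoeff]
      exact Polynomial.leadingCoeff_ne_zero.mpr hp0
    have hN := ih _ hcoeff
    have hZmeas : MeasurableSet {x : Fin (n+1) → ℝ | MvPolynomial.eval x P = 0} := by
      exact (isClosed_eq (MvPolynomial.continuous_eval P) continuous_const).measurableSet
    set e := MeasurableEquiv.piFinSuccAbove (fun _ : Fin (n+1) => ℝ) 0 with hedef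
    have hmp := MeasureTheory.volume_preserving_piFinSuccAbove (fun _ : Fin (n+1) => ℝ) 0
    rw [← (hmp.symm e).measure_preimage_equiv]
    have hpre : e.symm ⁻¹' {x : Fin (n+1) → ℝ | MvPolynomial.eval x P = 0} =
        {q : ℝ × (Fin n → ℝ) |
          Polynomial.eval q.1 (Polynomial.map (MvPolynomial.eval q.2) p) = 0} := by
      ext ⟨t, x⟩
      have : e.symm (t, x) = Fin.cons t x := by
        simp [hedef, MeasurableEquiv.piFinSuccAbove, Fin.insertNthEquiv]
      simp only [Set.mem_preimage, this, Set.mem_setOf_eq]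
      rw [MvPolynomial.eval_eq_eval_mv_eval']
    rw [hpre]
    have hmeas2 : MeasurableSet {q : ℝ × (Fin n → ℝ) |
        Polynomial.eval q.1 (Polynomial.map (MvPolynomial.eval q.2) p) = 0} := by
      have : MeasurableSet (e.symm ⁻¹' {x : Fin (n+1) → ℝ | MvPolynomial.eval x P = 0}) :=
        e.symm.measurable hZmeas
      rwa [hpre] at this
    rw [Measure.volume_eq_prod, Measure.prod_apply_symm hmeas2]
    have hae : (fun x : Fin n → ℝ =>
        volume ((fun t => (t, x)) ⁻¹' {q : ℝ × (Fin n → ℝ) |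
          Polynomial.eval q.1 (Polynomial.map (MvPolynomial.eval q.2) p) = 0}))
        =ᵐ[volume] 0 := by
      have hNae : ∀ᵐ x : Fin n → ℝ ∂volume,
          MvPolynomial.eval x (p.coeff p.natDegree) ≠ 0 := by
        rw [ae_iff]
        simpa using hN
      filter_upwards [hNae] with x hx
      have hq0 : Polynomial.map (MvPolynomial.eval x) p ≠ 0 := by
        intro h
        apply hx
        have := congrArg (fun q => Polynomial.coeff q p.natDegree) h
        simpa [Polynomial.coeff_map] using this
      have hfin : Set.Finite {t : ℝ |
          Polynomial.eval t (Polynomial.map (MvPolynomial.eval x) p) = 0} :=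
        Polynomial.finite_setOf_isRoot hq0
      simpa using hfin.measure_zero volume
    rw [lintegral_congr_ae hae]
    simp

lemma natDegree_aeval_le' {k : ℕ} (Q : MvPolynomial (Fin k) ℝ) (f : Fin k → Polynomial ℝ)
    (hf : ∀ i, (f i).natDegree ≤ 1) :
    (MvPolynomial.aeval f Q).natDegree ≤ Q.totalDegree := by
  rw [MvPolynomial.aeval_def, MvPolynomial.eval₂_eq]
  apply Polynomial.natDegree_sum_le_of_forall_le
  intro m hm
  refine Polynomial.natDegree_mul_le.trans ?_
  rw [Polynomial.algebraMap_eq, Polynomial.natDegree_C, zero_add]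
  refine (Polynomial.natDegree_prod_le _ _).trans ?_
  calc ∑ i ∈ m.support, ((f i) ^ m i).natDegree
      ≤ ∑ i ∈ m.support, m i * (f i).natDegree :=
        Finset.sum_le_sum fun i _ => Polynomial.natDegree_pow_le
    _ ≤ ∑ i ∈ m.support, m i * 1 :=
        Finset.sum_le_sum fun i _ => Nat.mul_le_mul_left _ (hf i)
    _ = m.sum fun _ e => e := by simp [Finsupp.sum]
    _ ≤ Q.totalDegree := MvPolynomial.le_totalDegree hm

lemma root_encard_le {p : Polynomial ℝ} (hp : p ≠ 0) :
    ({t : ℝ | Polynomial.eval t p = 0}).encard ≤ (p.natDegree : ℕ∞) := by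
  have h1 : {t : ℝ | Polynomial.eval t p = 0} = ↑p.roots.toFinset := by
    ext t
    simp [Polynomial.mem_roots, hp, Polynomial.IsRoot]
  rw [h1, Set.encard_coe_eq_coe_finsetCard]
  exact_mod_cast (Multiset.toFinset_card_le _).trans (p.card_roots')

theorem cylinder_estimate (k : ℕ) (hk : 2 ≤ k) :
    ∃ C : ℝ, 0 < C ∧
      ∀ d : ℕ, 0 < d →
        ∀ Q : MvPolynomial (Fin k) ℝ, Q ≠ 0 → Q.totalDegree ≤ d →
          ∀ v : EuclideanSpace ℝ (Fin k), ‖v‖ = 1 →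
            ∀ R : ℝ, 0 < R →
              (∫⁻ y in {y : EuclideanSpace ℝ (Fin k) | ⟪y, v⟫ = 0 ∧ ‖y‖ ≤ R},
                  (({t : ℝ | MvPolynomial.eval (fun i => (y + t • v) i) Q = 0}.encard :
                    ℕ∞) : ℝ≥0∞)
                  ∂(MeasureTheory.Measure.hausdorffMeasure ((k : ℝ) - 1)))
                ≤ ENNReal.ofReal (C * R ^ (k - 1) * d) := by
  obtain ⟨n, rfl⟩ : ∃ n, k = n + 1 := ⟨k - 1, (Nat.succ_pred_eq_of_pos (by omega)).symm⟩
  have hn1 : 1 ≤ n := by omega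
  have hn1R : (1:ℝ) ≤ n := by exact_mod_cast hn1
  have hCpos : (0:ℝ) < (2*(n:ℝ))^n := pow_pos (by linarith) n
  refine ⟨(2*(n:ℝ))^n, hCpos, ?_⟩
  intro d hd Q hQ hQd v hv R hR
  have hv0 : v ≠ 0 := fun h => by rw [h] at hv; simp at hv
  haveI : Fact (Module.finrank ℝ (EuclideanSpace ℝ (Fin (n+1))) = n + 1) :=
    ⟨by simp [finrank_euclideanSpace_fin]⟩
  have hdim : Module.finrank ℝ ((ℝ ∙ v)ᗮ : Submodule ℝ (EuclideanSpace ℝ (Fin (n+1)))) = n :=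
    Submodule.finrank_orthogonal_span_singleton hv0
  let B := (stdOrthonormalBasis ℝ ((ℝ ∙ v)ᗮ : Submodule ℝ (EuclideanSpace ℝ (Fin (n+1))))).reindex
    (finCongr hdim)
  let L : EuclideanSpace ℝ (Fin n) ≃ₗᵢ[ℝ] (ℝ ∙ v)ᗮ := B.repr.symm
  let ιL : EuclideanSpace ℝ (Fin n) →ₗᵢ[ℝ] EuclideanSpace ℝ (Fin (n+1)) :=
    ((ℝ ∙ v)ᗮ : Submodule ℝ (EuclideanSpace ℝ (Fin (n+1)))).subtypeₗᵢ.comp L.toLinearIsometry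
  have hrange : ∀ y : EuclideanSpace ℝ (Fin (n+1)), ⟪y, v⟫ = 0 → ∃ z, ιL z = y := by
    intro y hy
    refine ⟨L.symm ⟨y, Submodule.mem_orthogonal_singleton_iff_inner_left.2 hy⟩, ?_⟩
    simp [ιL]
  have hmem : ∀ z, ⟪(ιL z : EuclideanSpace ℝ (Fin (n+1))), v⟫ = 0 := by
    intro z
    exact Submodule.mem_orthogonal_singleton_iff_inner_left.1 (L z).2
  -- coordinates of ιL
  set a : Fin (n+1) → Fin n → ℝ := fun i j => (ιL (EuclideanSpace.single j 1)) i with ha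
  have hcoord : ∀ z : EuclideanSpace ℝ (Fin n), ∀ i, (ιL z) i = ∑ j, a i j * z j := by
    intro z i
    have hz : z = ∑ j, z j • EuclideanSpace.single j (1:ℝ) := by
      ext j
      rw [WithLp.ofLp_sum, Finset.sum_apply]
      simp [EuclideanSpace.single_apply]
    conv_lhs => rw [hz]
    rw [map_sum]
    rw [WithLp.ofLp_sum, Finset.sum_apply]
    congr 1
    ext j
    rw [ιL.map_smul]
    simp [ha, mul_comm]
  -- a nonvanishing point
  have hx0 : ∃ x : Fin (n+1) → ℝ, MvPolynomial.eval x Q ≠ 0 := by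
    by_contra h
    push_neg at h
    exact hQ (MvPolynomial.funext fun x => by simp [h x])
  obtain ⟨x0, hx0⟩ := hx0
  let x0' : EuclideanSpace ℝ (Fin (n+1)) := WithLp.toLp 2 x0
  set t0 : ℝ := ⟪x0', v⟫ with ht0
  set y0 : EuclideanSpace ℝ (Fin (n+1)) := x0' - t0 • v with hy0def
  have hy0 : ⟪y0, v⟫ = 0 := by
    rw [hy0def, inner_sub_left, real_inner_smul_left, real_inner_self_eq_norm_sq, hv]
    ring
  obtain ⟨z0, hz0⟩ := hrange y0 hy0
  -- the polynomial on the cross-section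
  set Q' : MvPolynomial (Fin n) ℝ := MvPolynomial.aeval
    (fun i : Fin (n+1) => MvPolynomial.C (t0 * v i) + ∑ j, MvPolynomial.C (a i j) *
      MvPolynomial.X j) Q with hQ'def
  have hQ'eval : ∀ z : EuclideanSpace ℝ (Fin n),
      MvPolynomial.eval (fun j => z j) Q' =
        MvPolynomial.eval (fun i => (ιL z + t0 • v) i) Q := by
    intro z
    rw [hQ'def, MvPolynomial.aeval_def, MvPolynomial.eval₂_comp_left
      (MvPolynomial.eval (fun j => z j))]
    have h1 : (MvPolynomial.eval (fun j => z j)).comp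
        (algebraMap ℝ (MvPolynomial (Fin n) ℝ)) = RingHom.id ℝ := by
      ext c
      simp [MvPolynomial.algebraMap_eq]
    rw [h1, MvPolynomial.eval₂_id]
    have h2 : (⇑(MvPolynomial.eval fun j => z j) ∘ fun i =>
        MvPolynomial.C (t0 * v i) + ∑ j : Fin n, MvPolynomial.C (a i j) * MvPolynomial.X j)
        = fun i => (ιL z + t0 • v) i := by
      funext i
      simp only [Function.comp_apply, map_add, map_sum, map_mul, MvPolynomial.eval_C,
        MvPolynomial.eval_X, PiLp.add_apply, PiLp.smul_apply, smul_eq_mul]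
      rw [hcoord z i]
      ring
    rw [h2]
  have hQ'0 : Q' ≠ 0 := by
    intro h
    apply hx0
    have h2 := hQ'eval z0
    rw [h] at h2
    simp only [map_zero] at h2
    have h3 : ιL z0 + t0 • v = x0' := by
      rw [hz0, hy0def]; abel
    rw [h3] at h2
    exact h2.symm
  -- the measure on the pi space
  have hμpi : (μH[(n:ℝ)] : Measure (Fin n → ℝ)) = volume := by
    simpa using MeasureTheory.hausdorffMeasure_pi_real (ι := Fin n)
  set eqv := WithLp.equiv 2 (Fin n → ℝ) with heqv
  have key : ∀ s : Set (EuclideanSpace ℝ (Fin n)),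
      μH[(n:ℝ)] (⇑ιL '' s) ≤ ((n : NNReal) : ℝ≥0∞) ^ n * volume (eqv '' s) := by
    intro s
    rw [ιL.isometry.hausdorffMeasure_image (Or.inl (by positivity))]
    refine le_trans ((PiLp.antilipschitzWith_ofLp 2 (fun _ : Fin n => ℝ)).le_hausdorffMeasure_image
      (d := (n:ℝ)) (by positivity) s) ?_
    rw [hμpi]
    refine _root_.mul_le_mul_left ?_ _
    have h1 : ((Fintype.card (Fin n) : NNReal) ^ (1/(2:ℝ≥0∞)).toReal : NNReal) ≤ (n : NNReal) := by
      rw [Fintype.card_fin]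
      calc ((n : NNReal) ^ (1/(2:ℝ≥0∞)).toReal : NNReal) ≤ (n : NNReal) ^ (1:ℝ) := by
            apply NNReal.rpow_le_rpow_of_exponent_le
            · exact_mod_cast hn1
            · rw [one_div, ENNReal.toReal_inv]
              norm_num
        _ = (n : NNReal) := NNReal.rpow_one _
    calc ((((Fintype.card (Fin n) : NNReal) ^ (1/(2:ℝ≥0∞)).toReal : NNReal)) : ℝ≥0∞) ^ ((n:ℝ))
        ≤ ((n : NNReal) : ℝ≥0∞) ^ ((n:ℝ)) := by
          apply ENNReal.rpow_le_rpow _ (by positivity)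
          exact_mod_cast h1
      _ = ((n : NNReal) : ℝ≥0∞) ^ n := by
          rw [← ENNReal.rpow_natCast]
  -- the bad set is null
  set Zn : Set (EuclideanSpace ℝ (Fin n)) :=
    {z | MvPolynomial.eval (fun j => z j) Q' = 0} with hZn
  have hbad : μH[(n:ℝ)] (⇑ιL '' Zn) = 0 := by
    refine le_antisymm (le_trans (key Zn) ?_) zero_le
    have himg : eqv '' Zn = {x : Fin n → ℝ | MvPolynomial.eval x Q' = 0} := by
      have : Zn = eqv ⁻¹' {x : Fin n → ℝ | MvPolynomial.eval x Q' = 0} := rfl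
      rw [this, Equiv.image_preimage]
    rw [himg, polyzero n Q' hQ'0, mul_zero]
  -- the disc bound
  have hdisc : μH[(n:ℝ)] (⇑ιL '' Metric.closedBall 0 R) ≤
      ((n : NNReal) : ℝ≥0∞) ^ n * ENNReal.ofReal (2*R) ^ n := by
    refine le_trans (key _) (_root_.mul_le_mul_right ?_ _)
    have hsub : eqv '' Metric.closedBall 0 R ⊆ Metric.closedBall (0 : Fin n → ℝ) R := by
      rintro x ⟨z, hz, rfl⟩
      have h1 := (PiLp.lipschitzWith_ofLp 2 (fun _ : Fin n => ℝ)).dist_le_mul z 0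
      rw [Metric.mem_closedBall] at hz ⊢
      calc dist (eqv z) 0 = dist (eqv z) (eqv 0) := rfl
        _ ≤ 1 * dist z 0 := h1
        _ ≤ R := by rw [one_mul]; exact hz
    refine le_trans (measure_mono hsub) ?_
    rw [closedBall_pi _ hR.le]
    rw [MeasureTheory.volume_pi_pi]
    simp only [Pi.zero_apply, Real.volume_closedBall]
    rw [Finset.prod_const, Finset.card_univ, Fintype.card_fin]
  -- the set S
  set S : Set (EuclideanSpace ℝ (Fin (n+1))) := {y | ⟪y, v⟫ = 0 ∧ ‖y‖ ≤ R} with hSdef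
  have hS : S = ⇑ιL '' Metric.closedBall 0 R := by
    ext y
    constructor
    · rintro ⟨h1, h2⟩
      obtain ⟨z, rfl⟩ := hrange y h1
      exact ⟨z, by rwa [Metric.mem_closedBall, dist_zero_right, ← ιL.norm_map z], rfl⟩
    · rintro ⟨z, hz, rfl⟩
      refine ⟨hmem z, ?_⟩
      rw [ιL.norm_map]
      rwa [Metric.mem_closedBall, dist_zero_right] at hz
  have hSmeas : MeasurableSet S := by
    have h1 : IsClosed {y : EuclideanSpace ℝ (Fin (n+1)) | ⟪y, v⟫ = 0} :=
      isClosed_eq (Continuous.inner continuous_id continuous_const) continuous_const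
    have h2 : IsClosed {y : EuclideanSpace ℝ (Fin (n+1)) | ‖y‖ ≤ R} :=
      isClosed_le continuous_norm continuous_const
    exact (h1.inter h2).measurableSet
  -- the line polynomial
  have hline : ∀ y : EuclideanSpace ℝ (Fin (n+1)), ∀ t : ℝ,
      Polynomial.eval t (MvPolynomial.aeval
        (fun i => Polynomial.C (y i) + Polynomial.C (v i) * Polynomial.X) Q) =
      MvPolynomial.eval (fun i => (y + t • v) i) Q := by
    intro y t
    have h0 : Polynomial.eval t (MvPolynomial.aeval
        (fun i => Polynomial.C (y i) + Polynomial.C (v i) * Polynomial.X) Q) =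
        (Polynomial.evalRingHom t) (MvPolynomial.eval₂ (algebraMap ℝ (Polynomial ℝ))
          (fun i => Polynomial.C (y i) + Polynomial.C (v i) * Polynomial.X) Q) := rfl
    rw [h0, MvPolynomial.eval₂_comp_left (Polynomial.evalRingHom t)]
    have h1 : (Polynomial.evalRingHom t).comp (algebraMap ℝ (Polynomial ℝ)) = RingHom.id ℝ := by
      ext c
      simp [Polynomial.algebraMap_eq]
    rw [h1, MvPolynomial.eval₂_id]
    have h2 : (⇑(Polynomial.evalRingHom t) ∘ fun i =>
        Polynomial.C (y i) + Polynomial.C (v i) * Polynomial.X)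
        = fun i => (y + t • v) i := by
      funext i
      simp only [Function.comp_apply, map_add, map_mul, Polynomial.coe_evalRingHom,
        Polynomial.eval_add, Polynomial.eval_mul, Polynomial.eval_C, Polynomial.eval_X,
        PiLp.add_apply, PiLp.smul_apply, smul_eq_mul]
      ring
    rw [h2]
  -- pointwise bound off the bad set
  have hgood : ∀ y, y ∈ S → y ∉ ⇑ιL '' Zn →
      ({t : ℝ | MvPolynomial.eval (fun i => (y + t • v) i) Q = 0}.encard : ℕ∞) ≤ (d : ℕ∞) := by
    intro y hyS hyB
    set p : Polynomial ℝ := MvPolynomial.aeval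
      (fun i => Polynomial.C (y i) + Polynomial.C (v i) * Polynomial.X) Q with hpdef
    have hp0 : p ≠ 0 := by
      intro h
      apply hyB
      obtain ⟨z, rfl⟩ := hrange y hyS.1
      refine ⟨z, ?_, rfl⟩
      show MvPolynomial.eval (fun j => z j) Q' = 0
      rw [hQ'eval z]
      have h3 := hline (ιL z) t0
      rw [← hpdef, h] at h3
      simp only [Polynomial.eval_zero] at h3
      exact h3.symm
    have h1 : {t : ℝ | MvPolynomial.eval (fun i => (y + t • v) i) Q = 0}
        = {t : ℝ | Polynomial.eval t p = 0} := by
      ext t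
      rw [Set.mem_setOf_eq, Set.mem_setOf_eq, hpdef, hline y t]
    rw [h1]
    refine (root_encard_le hp0).trans ?_
    have h2 : p.natDegree ≤ d := by
      refine le_trans ?_ hQd
      refine natDegree_aeval_le' Q _ ?_
      intro i
      refine (Polynomial.natDegree_add_le _ _).trans ?_
      refine max_le (by simp) ?_
      refine (Polynomial.natDegree_mul_le).trans ?_
      simp [Polynomial.natDegree_X_le]
    exact_mod_cast h2
  -- assemble
  have hind : (((n+1:ℕ)):ℝ) - 1 = (n:ℝ) := by push_cast; ring
  rw [show ((n+1:ℕ) - 1) = n by omega]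
  have hae : ∀ᵐ y ∂(μH[(((n+1:ℕ)):ℝ) - 1] :
      Measure (EuclideanSpace ℝ (Fin (n+1)))).restrict S,
      (({t : ℝ | MvPolynomial.eval (fun i => (y + t • v) i) Q = 0}.encard : ℕ∞) : ℝ≥0∞)
        ≤ (d : ℝ≥0∞) := by
    rw [hind]
    refine (ae_restrict_iff' hSmeas).2 ?_
    have h0 : ∀ᵐ y ∂(μH[(n:ℝ)] : Measure (EuclideanSpace ℝ (Fin (n+1)))),
        y ∉ ⇑ιL '' Zn := by
      rw [ae_iff]
      simp only [not_not, Set.setOf_mem_eq]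
      exact hbad
    filter_upwards [h0] with y hy hyS
    have h4 := hgood y hyS hy
    calc (({t : ℝ | MvPolynomial.eval (fun i => (y + t • v) i) Q = 0}.encard : ℕ∞) : ℝ≥0∞)
        ≤ ((d : ℕ∞) : ℝ≥0∞) := ENat.toENNReal_le.2 h4
      _ = (d : ℝ≥0∞) := by simp
  calc (∫⁻ y in S,
        (({t : ℝ | MvPolynomial.eval (fun i => (y + t • v) i) Q = 0}.encard : ℕ∞) : ℝ≥0∞)
        ∂(μH[(((n+1:ℕ)):ℝ) - 1] : Measure (EuclideanSpace ℝ (Fin (n+1)))))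
      ≤ ∫⁻ _ in S, (d : ℝ≥0∞)
          ∂(μH[(((n+1:ℕ)):ℝ) - 1] : Measure (EuclideanSpace ℝ (Fin (n+1)))) :=
        lintegral_mono_ae hae
    _ = (d : ℝ≥0∞) * (μH[(((n+1:ℕ)):ℝ) - 1] : Measure (EuclideanSpace ℝ (Fin (n+1)))) S := by
        rw [MeasureTheory.setLIntegral_const]
    _ ≤ (d : ℝ≥0∞) * (((n : NNReal) : ℝ≥0∞) ^ n * ENNReal.ofReal (2*R) ^ n) := by
        refine _root_.mul_le_mul_right ?_ _
        rw [hind, hS]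
        exact hdisc
    _ ≤ ENNReal.ofReal ((2*(n:ℝ))^n * R ^ n * d) := by
        have e1 : ((n : NNReal) : ℝ≥0∞) = ENNReal.ofReal (n:ℝ) := by
          simp [ENNReal.ofReal_natCast]
        have e2 : ((d : ℕ) : ℝ≥0∞) = ENNReal.ofReal (d:ℝ) := by
          simp [ENNReal.ofReal_natCast]
        rw [e1, e2, ← ENNReal.ofReal_pow (by positivity), ← ENNReal.ofReal_pow (by positivity),
          ← ENNReal.ofReal_mul (by positivity), ← ENNReal.ofReal_mul (by positivity)]
        refine ENNReal.ofReal_le_ofReal (le_of_eq ?_)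
        rw [mul_pow, mul_pow]
        ring
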